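/- Let u : [0,π] × [0,T) → ℝ be a C² solution of u_t = u_xx + (u_x)^p (p > 2 a real number) with u(0,t) = u(π,t) = 0, and set z(t) = ∫₀^π u(x,t) sin(x) dx. Then z satisfies the differential inequality z'(t) + z(t) ≥ C·z(t)^p whenever z(t) ≥ 0, where C > 0 is the constant of the weighted Poincaré inequality with weight sin(x). -/

import Mathlib

open MeasureTheory Real intervalIntegral

/-- If `u` is a `C²` solution of `u_t = u_xx + |u_x|^p` (`p > 2`) on `[0,π] × [0,T)` with
homogeneous Dirichlet boundary conditions, and `z(t) = ∫₀^π u(x,t) sin x dx`, then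
`z'(t) + z(t) ≥ C z(t)^p` whenever `z(t) ≥ 0`, where `C > 0` is the constant of the
weighted Poincaré inequality with weight `sin x`. -/
theorem stmt_5 (p : ℝ) (hp : 2 < p) (T : ℝ) (hT : 0 < T) (u : ℝ → ℝ → ℝ)
    (hu : ContDiff ℝ 2 (Function.uncurry u))
    (hPDE : ∀ x ∈ Set.Icc (0 : ℝ) Real.pi, ∀ t ∈ Set.Ico (0 : ℝ) T,
      deriv (fun s => u x s) t
        = deriv (deriv (fun y => u y t)) x + |deriv (fun y => u y t) x| ^ p)
    (hBC : ∀ t ∈ Set.Ico (0 : ℝ) T, u 0 t = 0 ∧ u Real.pi t = 0)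
    (C : ℝ) (hC : 0 < C)
    (hPoin : ∀ v : ℝ → ℝ, ContDiffOn ℝ 1 v (Set.Icc 0 Real.pi) →
      v 0 = 0 → v Real.pi = 0 →
      C * |∫ x in (0:ℝ)..Real.pi, v x * Real.sin x| ^ p
        ≤ ∫ x in (0:ℝ)..Real.pi, |derivWithin v (Set.Icc 0 Real.pi) x| ^ p * Real.sin x) :
    ∀ t ∈ Set.Ico (0 : ℝ) T,
      0 ≤ ∫ x in (0:ℝ)..Real.pi, u x t * Real.sin x →
      C * (∫ x in (0:ℝ)..Real.pi, u x t * Real.sin x) ^ p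
        ≤ deriv (fun s => ∫ x in (0:ℝ)..Real.pi, u x s * Real.sin x) t
          + ∫ x in (0:ℝ)..Real.pi, u x t * Real.sin x := by
  intro t ht hz
  set F := Function.uncurry u with hFdef
  have huF : ∀ x s : ℝ, F (x, s) = u x s := fun x s => rfl
  -- first partial derivatives
  set G : ℝ × ℝ → ℝ := fun q => fderiv ℝ F q (1, 0) with hGdef
  set H : ℝ × ℝ → ℝ := fun q => fderiv ℝ F q (0, 1) with hHdef
  have hfd : ContDiff ℝ 1 (fderiv ℝ F) := hu.fderiv_right (by norm_num)
  have hG1 : ContDiff ℝ 1 G := hfd.clm_apply contDiff_const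
  have hH1 : ContDiff ℝ 1 H := hfd.clm_apply contDiff_const
  -- second derivative in x
  set K : ℝ × ℝ → ℝ := fun q => fderiv ℝ G q (1, 0) with hKdef
  have hKc : Continuous K :=
    ((hG1.fderiv_right (m := 0) (by norm_num)).clm_apply contDiff_const).continuous
  have hFdiff : Differentiable ℝ F := hu.differentiable (by norm_num)
  -- partial derivative in x
  have hdx : ∀ x s : ℝ, HasDerivAt (fun y => u y s) (G (x, s)) x := by
    intro x s
    have h1 : HasDerivAt (fun y : ℝ => (y, s)) ((1 : ℝ), (0 : ℝ)) x :=
      (hasDerivAt_id x).prodMk (hasDerivAt_const x s)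
    exact (hFdiff (x, s)).hasFDerivAt.comp_hasDerivAt x h1
  -- partial derivative in t
  have hdt : ∀ x s : ℝ, HasDerivAt (fun r => u x r) (H (x, s)) s := by
    intro x s
    have h1 : HasDerivAt (fun r : ℝ => (x, r)) ((0 : ℝ), (1 : ℝ)) s :=
      (hasDerivAt_const s x).prodMk (hasDerivAt_id s)
    exact (hFdiff (x, s)).hasFDerivAt.comp_hasDerivAt s h1
  -- second derivative in x
  have hdxx : ∀ x s : ℝ, HasDerivAt (fun y => G (y, s)) (K (x, s)) x := by
    intro x s
    have h1 : HasDerivAt (fun y : ℝ => (y, s)) ((1 : ℝ), (0 : ℝ)) x :=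
      (hasDerivAt_id x).prodMk (hasDerivAt_const x s)
    exact ((hG1.differentiable (by norm_num)) (x, s)).hasFDerivAt.comp_hasDerivAt x h1
  have hderiv_x : ∀ s : ℝ, deriv (fun y => u y s) = fun y => G (y, s) := by
    intro s; funext y; exact (hdx y s).deriv
  have hderiv_xx : ∀ x s : ℝ, deriv (deriv (fun y => u y s)) x = K (x, s) := by
    intro x s; rw [hderiv_x s]; exact (hdxx x s).deriv
  -- continuity facts
  have hGc : Continuous G := hG1.continuous
  have hHc : Continuous H := hH1.continuous
  have huc : Continuous F := hu.continuous
  have hu_t : Continuous (fun x => u x t) :=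
    huc.comp (continuous_id.prodMk continuous_const)
  have hG_t : Continuous (fun x => G (x, t)) :=
    hGc.comp (continuous_id.prodMk continuous_const)
  have hH_t : Continuous (fun x => H (x, t)) :=
    hHc.comp (continuous_id.prodMk continuous_const)
  have hK_t : Continuous (fun x => K (x, t)) :=
    hKc.comp (continuous_id.prodMk continuous_const)
  have hGp_t : Continuous (fun x => |G (x, t)| ^ p) :=
    hG_t.abs.rpow_const (fun x => Or.inr (by positivity))
  -- derivative of z
  have hbound : ∃ M : ℝ, ∀ q ∈ Set.Icc (0 : ℝ) π ×ˢ Set.Icc (t - 1) (t + 1),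
      ‖H q * Real.sin q.1‖ ≤ M := by
    obtain ⟨M, hM⟩ := (IsCompact.exists_bound_of_continuousOn
      ((isCompact_Icc).prod isCompact_Icc)
      ((hHc.mul (continuous_sin.comp continuous_fst)).continuousOn))
    exact ⟨M, hM⟩
  obtain ⟨M, hM⟩ := hbound
  have hz' : HasDerivAt (fun s => ∫ x in (0:ℝ)..π, u x s * Real.sin x)
      (∫ x in (0:ℝ)..π, H (x, t) * Real.sin x) t := by
    have := intervalIntegral.hasDerivAt_integral_of_dominated_loc_of_deriv_le
      (F := fun s x => u x s * Real.sin x) (F' := fun s x => H (x, s) * Real.sin x)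
      (x₀ := t) (a := 0) (b := π) (μ := volume) (bound := fun _ => M)
      (s := Metric.ball t 1) (Metric.ball_mem_nhds t one_pos)
      (Filter.Eventually.of_forall fun s =>
        ((huc.comp (continuous_id.prodMk continuous_const)).mul
          continuous_sin).aestronglyMeasurable)
      ((hu_t.mul continuous_sin).intervalIntegrable 0 π)
      ((hH_t.mul continuous_sin).aestronglyMeasurable)
      (ae_of_all _ fun x hx s hs => by
        refine hM (x, s) ⟨?_, ?_⟩
        · rw [Set.uIoc_of_le Real.pi_pos.le] at hx
          exact ⟨le_of_lt hx.1, hx.2⟩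
        · have : |s - t| < 1 := by simpa [Real.dist_eq] using hs
          constructor <;> [linarith [abs_lt.mp this]; linarith [abs_lt.mp this]])
      (intervalIntegrable_const)
      (ae_of_all _ fun x hx s hs => (hdt x s).mul_const (Real.sin x))
    exact this.2
  rw [hz'.deriv]
  -- rewrite PDE
  have hPDE' : ∀ x ∈ Set.Icc (0 : ℝ) π, H (x, t) = K (x, t) + |G (x, t)| ^ p := by
    intro x hx
    have := hPDE x hx t ht
    rw [(hdt x t).deriv, hderiv_xx x t, hderiv_x t] at this
    exact this
  have hI1 : (∫ x in (0:ℝ)..π, H (x, t) * Real.sin x)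
      = (∫ x in (0:ℝ)..π, (K (x, t) + |G (x, t)| ^ p) * Real.sin x) := by
    apply intervalIntegral.integral_congr
    intro x hx
    rw [Set.uIcc_of_le Real.pi_pos.le] at hx
    show H (x, t) * Real.sin x = (K (x, t) + |G (x, t)| ^ p) * Real.sin x
    rw [hPDE' x hx]
  have hsplit : (∫ x in (0:ℝ)..π, (K (x, t) + |G (x, t)| ^ p) * Real.sin x)
      = (∫ x in (0:ℝ)..π, K (x, t) * Real.sin x)
        + (∫ x in (0:ℝ)..π, |G (x, t)| ^ p * Real.sin x) := by
    rw [← intervalIntegral.integral_add (f := fun x => K (x, t) * Real.sin x)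
      (g := fun x => |G (x, t)| ^ p * Real.sin x)
      ((hK_t.mul continuous_sin).intervalIntegrable 0 π)
      ((hGp_t.mul continuous_sin).intervalIntegrable 0 π)]
    congr 1; funext x; ring
  -- integration by parts, twice
  have hIBP1 : (∫ x in (0:ℝ)..π, (K (x, t) * Real.sin x + G (x, t) * Real.cos x))
      = G (π, t) * Real.sin π - G (0, t) * Real.sin 0 := by
    exact intervalIntegral.integral_deriv_mul_eq_sub
      (fun x _ => hdxx x t) (fun x _ => Real.hasDerivAt_sin x)
      ((hK_t).intervalIntegrable 0 π) (continuous_cos.intervalIntegrable 0 π)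
  have hIBP2 : (∫ x in (0:ℝ)..π, (G (x, t) * Real.cos x + u x t * (-Real.sin x)))
      = u π t * Real.cos π - u 0 t * Real.cos 0 := by
    exact intervalIntegral.integral_deriv_mul_eq_sub
      (fun x _ => hdx x t) (fun x _ => Real.hasDerivAt_cos x)
      ((hG_t).intervalIntegrable 0 π) (continuous_sin.neg.intervalIntegrable 0 π)
  have hBCt := hBC t ht
  have hIBP2' : (∫ x in (0:ℝ)..π, G (x, t) * Real.cos x)
      = ∫ x in (0:ℝ)..π, u x t * Real.sin x := by
    have e1 : (∫ x in (0:ℝ)..π, (G (x, t) * Real.cos x + u x t * (-Real.sin x)))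
        = (∫ x in (0:ℝ)..π, G (x, t) * Real.cos x)
          - ∫ x in (0:ℝ)..π, u x t * Real.sin x := by
      rw [intervalIntegral.integral_add (f := fun x => G (x, t) * Real.cos x)
        (g := fun x => u x t * -Real.sin x)
        ((hG_t.mul continuous_cos).intervalIntegrable 0 π)
        ((hu_t.mul continuous_sin.neg).intervalIntegrable 0 π)]
      simp only [mul_neg]
      rw [intervalIntegral.integral_neg]
      ring
    rw [e1, hBCt.1, hBCt.2] at hIBP2
    simp at hIBP2
    linarith
  have hIBP1' : (∫ x in (0:ℝ)..π, K (x, t) * Real.sin x)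
      = - ∫ x in (0:ℝ)..π, u x t * Real.sin x := by
    have e1 : (∫ x in (0:ℝ)..π, (K (x, t) * Real.sin x + G (x, t) * Real.cos x))
        = (∫ x in (0:ℝ)..π, K (x, t) * Real.sin x)
          + ∫ x in (0:ℝ)..π, G (x, t) * Real.cos x :=
      intervalIntegral.integral_add
        ((hK_t.mul continuous_sin).intervalIntegrable 0 π)
        ((hG_t.mul continuous_cos).intervalIntegrable 0 π)
    rw [e1] at hIBP1
    simp [Real.sin_pi] at hIBP1
    rw [hIBP2'] at hIBP1
    linarith
  -- Poincaré inequality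
  have hv1 : ContDiff ℝ 1 (fun x => u x t) :=
    (hu.of_le (by norm_num)).comp (contDiff_id.prodMk contDiff_const)
  have hvP := hPoin (fun x => u x t) hv1.contDiffOn hBCt.1 hBCt.2
  have hderivWithin : ∀ x ∈ Set.Icc (0 : ℝ) π,
      derivWithin (fun x => u x t) (Set.Icc 0 π) x = G (x, t) := by
    intro x hx
    rw [(hdx x t).differentiableAt.derivWithin (uniqueDiffOn_Icc Real.pi_pos x hx)]
    exact (hdx x t).deriv
  have hvP' : C * |∫ x in (0:ℝ)..π, u x t * Real.sin x| ^ p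
      ≤ ∫ x in (0:ℝ)..π, |G (x, t)| ^ p * Real.sin x := by
    refine le_trans hvP (le_of_eq ?_)
    apply intervalIntegral.integral_congr
    intro x hx
    rw [Set.uIcc_of_le Real.pi_pos.le] at hx
    show |derivWithin (fun x => u x t) (Set.Icc 0 π) x| ^ p * Real.sin x
      = |G (x, t)| ^ p * Real.sin x
    rw [hderivWithin x hx]
  rw [abs_of_nonneg hz] at hvP'
  rw [hI1, hsplit, hIBP1']
  linarith
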